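/- arXiv:1807.07945 — 2 statements merged into one kernel-verified Lean document; each statement's English description precedes it below -/
import Mathlib

section
/- Let k ≥ 2 and λ ≥ 1 be integers, and let x be an infinite word over a finite alphabet such that the lower density of AP(x,k,λ) is strictly less than (1 + ⌊(k² - k)/(λ² + λ)⌋)^{-1}. Then there exists a single nonempty finite word u with |u| ≤ (k-1)·⌊(k² - k)/(λ² + λ)⌋ such that u^ℓ is a factor of x for every positive integer ℓ. In particular, x is not ω-power-free. -/
/-- `u ^ ℓ` : the finite word `u` concatenated with itself `ℓ` times. -/
def powWord {A : Type*} (u : List A) (ℓ : ℕ) : List A :=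
  (List.replicate ℓ u).flatten

/-- The finite word `u` occurs in the infinite word `x` at position `i`. -/
def OccursAt {A : Type*} (x : ℕ → A) (u : List A) (i : ℕ) : Prop :=
  u = (List.range u.length).map fun j => x (i + j)

/-- The finite word `u` is a factor of the infinite word `x`. -/
def IsFactor {A : Type*} (x : ℕ → A) (u : List A) : Prop :=
  ∃ i, OccursAt x u i

/-- An infinite word `x` is `ω`-power-free if for every nonempty finite factor `u` of `x`
there is an `ℓ` such that `u^ℓ` is not a factor of `x`. -/
def OmegaPowerFree {A : Type*} (x : ℕ → A) : Prop :=
  ∀ u : List A, u ≠ [] → IsFactor x u → ∃ ℓ : ℕ, ¬ IsFactor x (powWord u ℓ)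

/-- The `i`-th block of length `m` of the infinite word `x`. -/
def blockAt {A : Type*} (x : ℕ → A) (m i : ℕ) : List A :=
  (List.range m).map fun t => x (i * m + t)

/-- `APset x k λ` : the set of `m ≥ 1` such that the prefix of `x` of length `k*m` is a
`(k,λ)`-anti-power. -/
def APset {A : Type*} (x : ℕ → A) (k lam : ℕ) : Set ℕ :=
  {m | 1 ≤ m ∧ ∀ j < k,
    Nat.card {i : ℕ // i < k ∧ blockAt x m i = blockAt x m j} ≤ lam}

/-- The lower density of a set of natural numbers. -/
noncomputable def lowerDensity (S : Set ℕ) : ℝ :=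
  Filter.atTop.liminf fun n => (Nat.card ↥(S ∩ Set.Icc 1 n) : ℝ) / n

section helper
variable {A : Type*}

lemma powWord_add (u : List A) (a b : ℕ) :
    powWord u (a + b) = powWord u a ++ powWord u b := by
  unfold powWord
  rw [List.replicate_add, List.flatten_append]

lemma occursAt_append_left {x : ℕ → A} {a b : List A} {i : ℕ}
    (h : OccursAt x (a ++ b) i) : OccursAt x a i := by
  unfold OccursAt at h ⊢
  rw [List.length_append, List.range_add, List.map_append] at h
  exact List.append_inj_left h (by simp)

lemma isFactor_pow_mono {x : ℕ → A} {u : List A} {a b : ℕ} (hab : a ≤ b)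
    (h : IsFactor x (powWord u b)) : IsFactor x (powWord u a) := by
  obtain ⟨i, hi⟩ := h
  obtain ⟨c, rfl⟩ := Nat.exists_eq_add_of_le hab
  rw [powWord_add] at hi
  exact ⟨i, occursAt_append_left hi⟩

lemma powWord_eq_range_map (P : ℕ) (ℓ : ℕ) (y : ℕ → A)
    (hy : ∀ t, t + P < ℓ * P → y (t + P) = y t) :
    powWord ((List.range P).map y) ℓ = (List.range (ℓ * P)).map y := by
  induction ℓ with
  | zero => simp [powWord]
  | succ n ih =>
      have hy' : ∀ t, t + P < n * P → y (t + P) = y t := by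
        intro t ht
        exact hy t (lt_of_lt_of_le ht (Nat.mul_le_mul_right _ (Nat.le_succ n)))
      have ihn := ih hy'
      have h1 : n + 1 = 1 + n := by omega
      rw [h1, powWord_add, ihn]
      have h2 : powWord ((List.range P).map y) 1 = (List.range P).map y := by
        simp [powWord]
      rw [h2]
      have h3 : (1 + n) * P = P + n * P := by ring
      rw [h3, List.range_add, List.map_append]
      congr 1
      rw [List.map_map]
      apply List.map_congr_left
      intro t ht
      rw [List.mem_range] at ht
      have := hy t (by nlinarith)
      simpa [Function.comp, Nat.add_comm] using this.symm

lemma blockAt_eq_iff {x : ℕ → A} {m i j : ℕ} :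
    blockAt x m i = blockAt x m j ↔ ∀ t < m, x (i * m + t) = x (j * m + t) := by
  unfold blockAt
  rw [List.map_inj_left]
  constructor
  · intro h t ht; exact h t (List.mem_range.2 ht)
  · intro h t ht; exact h t (List.mem_range.1 ht)

lemma exists_equal_blocks {x : ℕ → A} {k lam m : ℕ} (hm : 1 ≤ m)
    (hbad : m ∉ APset x k lam) :
    ∃ T : Finset ℕ, T ⊆ Finset.range k ∧ T.card = lam + 1 ∧
      ∀ i ∈ T, ∀ j ∈ T, blockAt x m i = blockAt x m j := by
  classical
  simp only [APset, Set.mem_setOf_eq, not_and, not_forall, not_le] at hbad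
  obtain ⟨j, hjk, hcard⟩ := hbad hm
  set s := (Finset.range k).filter (fun i => blockAt x m i = blockAt x m j) with hs
  have hcards : Nat.card {i : ℕ // i < k ∧ blockAt x m i = blockAt x m j} = s.card := by
    rw [← Nat.card_eq_finsetCard]
    apply Nat.card_congr
    apply Equiv.subtypeEquivRight
    intro i
    simp [hs, Finset.mem_filter, Finset.mem_range]
  rw [hcards] at hcard
  obtain ⟨T, hTs, hTcard⟩ := Finset.exists_subset_card_eq (show lam + 1 ≤ s.card by omega)
  refine ⟨T, hTs.trans (Finset.filter_subset _ _), hTcard, ?_⟩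
  intro a ha b hb
  have h1 := (Finset.mem_filter.1 (hTs ha)).2
  have h2 := (Finset.mem_filter.1 (hTs hb)).2
  rw [h1, h2]

end helper

section helper2
variable {A : Type*}

lemma nat_lt_div_succ_mul {a b : ℕ} (hb : 0 < b) : a < (a / b + 1) * b := by
  have h1 := Nat.div_add_mod a b
  have h2 := Nat.mod_lt a hb
  nlinarith [Nat.div_mul_le_self a b]

lemma window_pigeonhole {x : ℕ → A} {k lam : ℕ} (γ : ℕ)
    (hγnum : k ^ 2 - k < (γ + 1) * (lam ^ 2 + lam)) {M : ℕ} (hM : 1 ≤ M)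
    (hbad : ∀ r ≤ γ, (M + r) ∉ APset x k lam) :
    ∃ i j m m', i < j ∧ j < k ∧ M ≤ m ∧ m < m' ∧ m' ≤ M + γ ∧
      blockAt x m i = blockAt x m j ∧ blockAt x m' i = blockAt x m' j := by
  classical
  set U := (Finset.range k).offDiag with hU
  set S : ℕ → Finset (ℕ × ℕ) :=
    fun m => U.filter (fun p => blockAt x m p.1 = blockAt x m p.2) with hS
  set W := Finset.Icc M (M + γ) with hW
  have hcardS : ∀ m ∈ W, lam ^ 2 + lam ≤ (S m).card := by
    intro m hm
    rw [hW, Finset.mem_Icc] at hm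
    have hbm : m ∉ APset x k lam := by
      have := hbad (m - M) (by omega)
      rwa [show M + (m - M) = m by omega] at this
    obtain ⟨T, hTsub, hTcard, hTeq⟩ := exists_equal_blocks (by omega) hbm
    have hsub : T.offDiag ⊆ S m := by
      intro p hp
      rw [Finset.mem_offDiag] at hp
      refine Finset.mem_filter.2 ⟨?_, hTeq _ hp.1 _ hp.2.1⟩
      exact Finset.mem_offDiag.2 ⟨hTsub hp.1, hTsub hp.2.1, hp.2.2⟩
    calc lam ^ 2 + lam = T.offDiag.card := by
          rw [Finset.offDiag_card, hTcard]; ring_nf; omega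
      _ ≤ (S m).card := Finset.card_le_card hsub
  have hcardU : U.card = k ^ 2 - k := by
    rw [hU, Finset.offDiag_card, Finset.card_range]; ring_nf
  have hsum : (γ + 1) * (lam ^ 2 + lam) ≤ ∑ m ∈ W, (S m).card := by
    calc (γ + 1) * (lam ^ 2 + lam) = ∑ _m ∈ W, (lam ^ 2 + lam) := by
          rw [Finset.sum_const, hW, Nat.card_Icc, smul_eq_mul]
          congr 1; omega
      _ ≤ ∑ m ∈ W, (S m).card := Finset.sum_le_sum hcardS
  have hex : ∃ m ∈ W, ∃ m' ∈ W, m ≠ m' ∧ ¬ Disjoint (S m) (S m') := by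
    by_contra hcon
    push_neg at hcon
    have hcb := Finset.card_biUnion hcon
    have hsub2 : W.biUnion S ⊆ U := by
      intro p hp
      obtain ⟨m, _, hm⟩ := Finset.mem_biUnion.1 hp
      exact Finset.mem_filter.1 hm |>.1
    have := Finset.card_le_card hsub2
    omega
  obtain ⟨m, hmW, m', hm'W, hne, hndisj⟩ := hex
  obtain ⟨p, hp1, hp2⟩ := Finset.not_disjoint_iff.1 hndisj
  obtain ⟨i, j⟩ := p
  have hiU : (i, j) ∈ U := (Finset.mem_filter.1 hp1).1
  rw [hU, Finset.mem_offDiag] at hiU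
  obtain ⟨hik, hjk, hijne⟩ := hiU
  rw [Finset.mem_range] at hik hjk
  have he1 : blockAt x m i = blockAt x m j := (Finset.mem_filter.1 hp1).2
  have he2 : blockAt x m' i = blockAt x m' j := (Finset.mem_filter.1 hp2).2
  rw [hW, Finset.mem_Icc] at hmW hm'W
  -- order the scales and indices
  rcases lt_or_gt_of_ne hne with hlt | hgt
  · rcases lt_or_gt_of_ne hijne with hij | hij
    · exact ⟨i, j, m, m', hij, hjk, hmW.1, hlt, hm'W.2, he1, he2⟩
    · exact ⟨j, i, m, m', hij, hik, hmW.1, hlt, hm'W.2, he1.symm, he2.symm⟩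
  · rcases lt_or_gt_of_ne hijne with hij | hij
    · exact ⟨i, j, m', m, hij, hjk, hm'W.1, hgt, hmW.2, he2, he1⟩
    · exact ⟨j, i, m', m, hij, hik, hm'W.1, hgt, hmW.2, he2.symm, he1.symm⟩

lemma periodic_power {x : ℕ → A} {i j m m' : ℕ} (hij : i < j) (hmm : m < m')
    (h1 : blockAt x m i = blockAt x m j) (h2 : blockAt x m' i = blockAt x m' j)
    (ℓ : ℕ) (hm : i * (m' - m) + ℓ * ((j - i) * (m' - m)) ≤ m) :
    ∃ u : List A, u.length = (j - i) * (m' - m) ∧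
      OccursAt x (powWord u ℓ) (j * m + i * (m' - m)) := by
  set d := j - i with hd
  set r := m' - m with hr
  set P := d * r with hP
  have hper : ∀ s, i * r ≤ s → s < m → x (j * m + s) = x (j * m + s + P) := by
    intro s hs1 hs2
    have e1 : x (i * m + s) = x (j * m + s) := (blockAt_eq_iff.1 h1) s hs2
    have e2 : x (i * m' + (s - i * r)) = x (j * m' + (s - i * r)) :=
      (blockAt_eq_iff.1 h2) _ (by omega)
    have k1 : i * m' + (s - i * r) = i * m + s := by
      have : i * m' = i * m + i * r := by
        rw [show m' = m + r by omega, Nat.mul_add]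
      omega
    have k2 : j * m' + (s - i * r) = j * m + s + P := by
      have h3 : j * m' = j * m + j * r := by
        rw [show m' = m + r by omega, Nat.mul_add]
      have h4 : j * r = i * r + P := by
        have h5 : d * r = j * r - i * r := by rw [hd, Nat.sub_mul]
        have h6 : i * r ≤ j * r := Nat.mul_le_mul_right r hij.le
        omega
      omega
    rw [k1, k2] at e2
    rw [← e1, e2]
  set base := j * m + i * r with hbase
  refine ⟨(List.range P).map (fun t => x (base + t)), by simp, ?_⟩
  have heq : powWord ((List.range P).map (fun t => x (base + t))) ℓ
      = (List.range (ℓ * P)).map (fun t => x (base + t)) := by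
    apply powWord_eq_range_map
    intro t ht
    have hs2 : i * r + t < m := by
      have h5 : t < ℓ * P := by omega
      omega
    have := hper (i * r + t) (Nat.le_add_right _ _) hs2
    have hb1 : base + (t + P) = j * m + (i * r + t) + P := by omega
    have hb2 : base + t = j * m + (i * r + t) := by omega
    rw [hb1, hb2]
    exact this.symm
  unfold OccursAt
  rw [heq]
  simp

end helper2

section density
variable {A : Type*}

lemma density_lower {x : ℕ → A} {k lam : ℕ} (γ N : ℕ)
    (h : ∀ M, N ≤ M → ∃ r ≤ γ, (M + r) ∈ APset x k lam) :
    ((1 : ℝ) + γ)⁻¹ ≤ lowerDensity (APset x k lam) := by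
  set S := APset x k lam with hSdef
  have hcount : ∀ n : ℕ, (n + 1 - (N + γ)) / (γ + 1) ≤ Nat.card ↥(S ∩ Set.Icc 1 n) := by
    intro n
    set T := (n + 1 - (N + γ)) / (γ + 1) with hT
    have hfin : (S ∩ Set.Icc 1 n).Finite := (Set.finite_Icc 1 n).subset Set.inter_subset_right
    haveI := hfin.to_subtype
    have hchoose : ∀ t : Fin T, ∃ a, a ∈ S ∧ N + t.1 * (γ + 1) ≤ a ∧
        a ≤ N + t.1 * (γ + 1) + γ ∧ a ≤ n := by
      intro t
      have ht : t.1 < T := t.2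
      obtain ⟨r, hr, hmem⟩ := h (N + t.1 * (γ + 1)) (Nat.le_add_right _ _)
      refine ⟨N + t.1 * (γ + 1) + r, hmem, by omega, by omega, ?_⟩
      have hb : (t.1 + 1) * (γ + 1) ≤ T * (γ + 1) := Nat.mul_le_mul_right _ (by omega)
      have hb2 : T * (γ + 1) ≤ n + 1 - (N + γ) := by rw [hT]; exact Nat.div_mul_le_self _ _
      have hb3 : t.1 * (γ + 1) + (γ + 1) = (t.1 + 1) * (γ + 1) := by ring
      set p1 := t.1 * (γ + 1)
      set p2 := (t.1 + 1) * (γ + 1)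
      set p3 := T * (γ + 1)
      omega
    choose a ha using hchoose
    have hmono : ∀ s s' : Fin T, s < s' → a s < a s' := by
      intro s s' hss
      have h1 := (ha s).2.2.1
      have h2 := (ha s').2.1
      have h3 : (s.1 + 1) * (γ + 1) ≤ s'.1 * (γ + 1) :=
        Nat.mul_le_mul_right _ (by exact hss)
      have h4 : s.1 * (γ + 1) + (γ + 1) = (s.1 + 1) * (γ + 1) := by ring
      set p1 := s.1 * (γ + 1)
      set p2 := (s.1 + 1) * (γ + 1)
      set p3 := s'.1 * (γ + 1)
      omega
    set f : Fin T → ↥(S ∩ Set.Icc 1 n) := fun t =>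
      ⟨a t, (ha t).1, (ha t).1.1, (ha t).2.2.2⟩ with hf
    have hinj : Function.Injective f := by
      intro s s' hss
      have hval : a s = a s' := congrArg Subtype.val hss
      rcases lt_trichotomy s s' with hc | hc | hc
      · exact absurd hval (hmono s s' hc).ne
      · exact hc
      · exact absurd hval.symm (hmono s' s hc).ne
    calc T = Nat.card (Fin T) := by simp
      _ ≤ Nat.card ↥(S ∩ Set.Icc 1 n) := Nat.card_le_card_of_injective f hinj
  have hγpos : (0 : ℝ) < 1 + γ := by positivity
  set C : ℝ := (N : ℝ) + 2 * γ with hC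
  set c : ℝ := ((1 : ℝ) + γ)⁻¹ with hc
  set g : ℕ → ℝ := fun n => c - (C / (1 + γ)) / n with hg
  have hgt : Filter.Tendsto g Filter.atTop (nhds c) := by
    have h0 := tendsto_const_div_atTop_nhds_zero_nat (C / (1 + γ))
    have h1 := Filter.Tendsto.const_sub c h0
    simpa using h1
  have hgle : ∀ᶠ n in Filter.atTop, g n ≤ (Nat.card ↥(S ∩ Set.Icc 1 n) : ℝ) / n := by
    filter_upwards [Filter.eventually_ge_atTop 1] with n hn
    have hn0 : (0 : ℝ) < n := by exact_mod_cast hn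
    set T := (n + 1 - (N + γ)) / (γ + 1) with hT
    have h1 : (T : ℝ) ≤ (Nat.card ↥(S ∩ Set.Icc 1 n) : ℕ) := by exact_mod_cast hcount n
    have h2 : (n : ℝ) - C ≤ (1 + γ) * T := by
      have hx := nat_lt_div_succ_mul (a := n + 1 - (N + γ)) (b := γ + 1) (by omega)
      rw [← hT] at hx
      set p := (T + 1) * (γ + 1) with hp
      have hx3 : n + 1 ≤ p + (N + γ) := by omega
      have hpr : (p : ℝ) = ((T : ℝ) + 1) * ((γ : ℝ) + 1) := by rw [hp]; push_cast; ring
      have hx4 : ((n : ℝ) + 1) ≤ ((T : ℝ) + 1) * ((γ : ℝ) + 1) + ((N : ℝ) + γ) := by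
        have hcast := (Nat.cast_le (α := ℝ)).2 hx3
        push_cast at hcast
        rw [hpr] at hcast
        linarith [hcast]
      rw [hC]
      ring_nf at hx4 ⊢
      linarith [hx4]
    have h3 : g n ≤ (T : ℝ) / n := by
      show c - (C / (1 + γ)) / n ≤ (T : ℝ) / n
      have hid : c - (C / (1 + γ)) / n = ((n : ℝ) - C) / ((1 + γ) * n) := by
        rw [hc]; field_simp
      rw [hid, div_le_div_iff₀ (by positivity) hn0]
      have hTnn : (0 : ℝ) ≤ (T : ℝ) := Nat.cast_nonneg _
      nlinarith [h2, hn0.le, hTnn]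
    have h4 : (T : ℝ) / n ≤ (Nat.card ↥(S ∩ Set.Icc 1 n) : ℝ) / n := by gcongr
    linarith
  have hbdd : Filter.IsBoundedUnder (· ≥ ·) Filter.atTop g := hgt.isBoundedUnder_ge
  have hub : ∀ n : ℕ, (Nat.card ↥(S ∩ Set.Icc 1 n) : ℝ) / n ≤ 1 := by
    intro n
    rcases Nat.eq_zero_or_pos n with hn | hn
    · subst hn; simp
    · have hcard : Nat.card ↥(S ∩ Set.Icc 1 n) ≤ n := by
        have h5 : Nat.card ↥(S ∩ Set.Icc 1 n) ≤ Nat.card ↥(Set.Icc 1 n) := by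
          haveI := (Set.finite_Icc 1 n).to_subtype
          exact Nat.card_le_card_of_injective
            (Set.inclusion Set.inter_subset_right) (Set.inclusion_injective _)
        have h6 : Nat.card ↥(Set.Icc 1 n) = n := by
          rw [Nat.card_coe_set_eq, ← Finset.coe_Icc, Set.ncard_coe_finset,
            Nat.card_Icc]
          omega
        omega
      rw [div_le_one (by exact_mod_cast hn)]
      exact_mod_cast hcard
  have hcob : Filter.IsCoboundedUnder (· ≥ ·) Filter.atTop
      (fun n => (Nat.card ↥(S ∩ Set.Icc 1 n) : ℝ) / n) :=
    Filter.IsBoundedUnder.isCoboundedUnder_ge (Filter.isBoundedUnder_of ⟨1, hub⟩)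
  calc ((1 : ℝ) + γ)⁻¹ = Filter.liminf g Filter.atTop := (hgt.liminf_eq).symm
    _ ≤ _ := Filter.liminf_le_liminf hgle hbdd hcob

end density


/-- Over a finite alphabet, if `k ≥ 2`, `λ ≥ 1` and the lower density of
`AP(x,k,λ)` is strictly less than `(1 + ⌊(k² - k)/(λ² + λ)⌋)⁻¹`, then there is a single
nonempty word `u` with `|u| ≤ (k-1)·⌊(k² - k)/(λ² + λ)⌋` such that `u^ℓ` is a factor of `x`
for every `ℓ ≥ 1`; in particular, `x` is not `ω`-power-free. -/
theorem statement2 {A : Type*} [Finite A] (k lam : ℕ) (hk : 2 ≤ k) (hlam : 1 ≤ lam)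
    (x : ℕ → A)
    (hd : lowerDensity (APset x k lam) < ((1 : ℝ) + ((k ^ 2 - k) / (lam ^ 2 + lam) : ℕ))⁻¹) :
    (∃ u : List A, u ≠ [] ∧ u.length ≤ (k - 1) * ((k ^ 2 - k) / (lam ^ 2 + lam)) ∧
      ∀ ℓ : ℕ, 0 < ℓ → IsFactor x (powWord u ℓ)) ∧ ¬ OmegaPowerFree x := by
  classical
  set γ := (k ^ 2 - k) / (lam ^ 2 + lam) with hγ
  by_cases hkl : k ≤ lam
  · exfalso
    have hall : ∀ M, 1 ≤ M → M ∈ APset x k lam := by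
      intro M hM
      refine ⟨hM, fun j hj => ?_⟩
      have hle : Nat.card {i : ℕ // i < k ∧ blockAt x M i = blockAt x M j}
          ≤ Nat.card (Fin k) := by
        apply Nat.card_le_card_of_injective (fun p => (⟨p.1, p.2.1⟩ : Fin k))
        intro p q hpq
        exact Subtype.ext (congrArg Fin.val hpq)
      simp only [Nat.card_eq_fintype_card, Fintype.card_fin] at hle
      omega
    have hle := density_lower (x := x) γ 1
      (fun M hM => ⟨0, Nat.zero_le _, by simpa using hall M hM⟩)
    exact absurd hd (not_lt.2 hle)
  push_neg at hkl
  have hb0 : 0 < lam ^ 2 + lam := by positivity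
  have hγ1 : 1 ≤ γ := by
    rw [hγ, Nat.one_le_div_iff hb0]
    have h1 : lam * (lam + 1) ≤ (k - 1) * k := Nat.mul_le_mul (by omega) (by omega)
    have h2 : (k - 1) * k = k * k - 1 * k := Nat.sub_mul k 1 k
    have h3 : lam * (lam + 1) = lam * lam + lam := by ring
    have h4 : lam ^ 2 = lam * lam := pow_two lam
    have h5 : k ^ 2 = k * k := pow_two k
    omega
  have hγnum : k ^ 2 - k < (γ + 1) * (lam ^ 2 + lam) := by
    rw [hγ]; exact nat_lt_div_succ_mul hb0
  set B := (k - 1) * γ with hB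
  have hB1 : 1 ≤ B := by
    rw [hB]; exact Nat.one_le_iff_ne_zero.2 (Nat.mul_ne_zero (by omega) (by omega))
  have key : ∀ N : ℕ, ∃ M, N + 1 ≤ M ∧ ∀ r ≤ γ, (M + r) ∉ APset x k lam := by
    by_contra hcon
    push_neg at hcon
    obtain ⟨N, hN⟩ := hcon
    exact absurd hd (not_lt.2 (density_lower γ (N + 1) hN))
  have hΦ : ∀ ℓ : ℕ, ∃ u : List A, u ≠ [] ∧ u.length ≤ B ∧ IsFactor x (powWord u ℓ) := by
    intro ℓ
    obtain ⟨M, hM1, hMbad⟩ := key ((ℓ + 1) * B)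
    obtain ⟨i, j, m, m', hij, hjk, hm1, hmm, hm2, hbl1, hbl2⟩ :=
      window_pigeonhole γ hγnum (show 1 ≤ M by omega) hMbad
    have hr1 : 1 ≤ m' - m := by omega
    have hrγ : m' - m ≤ γ := by omega
    have hd1 : 1 ≤ j - i := by omega
    have hdk : j - i ≤ k - 1 := by omega
    have hik : i ≤ k - 1 := by omega
    have hP1 : 1 ≤ (j - i) * (m' - m) :=
      Nat.one_le_iff_ne_zero.2 (Nat.mul_ne_zero (by omega) (by omega))
    have hPB : (j - i) * (m' - m) ≤ B := by rw [hB]; exact Nat.mul_le_mul hdk hrγ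
    have hirB : i * (m' - m) ≤ B := by rw [hB]; exact Nat.mul_le_mul hik hrγ
    have hmbig : i * (m' - m) + ℓ * ((j - i) * (m' - m)) ≤ m := by
      have h6 : ℓ * ((j - i) * (m' - m)) ≤ ℓ * B := Nat.mul_le_mul_left _ hPB
      have h7 : (ℓ + 1) * B = ℓ * B + B := by ring
      set q1 := ℓ * ((j - i) * (m' - m))
      set q2 := ℓ * B
      set q3 := (ℓ + 1) * B
      omega
    obtain ⟨u, hulen, hocc⟩ := periodic_power hij hmm hbl1 hbl2 ℓ hmbig
    exact ⟨u, List.ne_nil_of_length_pos (by omega), by omega, ⟨_, hocc⟩⟩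
  have hfinset : {u : List A | u ≠ [] ∧ u.length ≤ B}.Finite :=
    (List.finite_length_le A B).subset (fun u hu => hu.2)
  haveI hfin : Finite ↥{u : List A | u ≠ [] ∧ u.length ≤ B} := hfinset.to_subtype
  set F : ℕ → ↥{u : List A | u ≠ [] ∧ u.length ≤ B} :=
    fun ℓ => ⟨(hΦ ℓ).choose, (hΦ ℓ).choose_spec.1, (hΦ ℓ).choose_spec.2.1⟩ with hF
  obtain ⟨y, hy⟩ := Finite.exists_infinite_fiber F
  have hyinf : (F ⁻¹' {y}).Infinite := Set.infinite_coe_iff.1 hy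
  have hfac : ∀ ℓ : ℕ, IsFactor x (powWord (y : List A) ℓ) := by
    intro ℓ
    obtain ⟨ℓ', hmem, hgt⟩ := hyinf.exists_gt ℓ
    have hFℓ' : F ℓ' = y := hmem
    have h' : IsFactor x (powWord (hΦ ℓ').choose ℓ') := (hΦ ℓ').choose_spec.2.2
    have hval : (hΦ ℓ').choose = (y : List A) := congrArg Subtype.val hFℓ'
    rw [hval] at h'
    exact isFactor_pow_mono hgt.le h'
  have hy2 : (y : List A) ≠ [] ∧ (y : List A).length ≤ B := y.2
  refine ⟨⟨(y : List A), hy2.1, hy2.2, fun ℓ _ => hfac ℓ⟩, ?_⟩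
  intro hop
  have hfy : IsFactor x (y : List A) := by
    have h1 := hfac 1
    have heq1 : powWord (y : List A) 1 = (y : List A) := by simp [powWord]
    rwa [heq1] at h1
  obtain ⟨ℓ, hℓ⟩ := hop (y : List A) hy2.1 hfy
  exact hℓ (hfac ℓ)
end

section
/- Let y be the infinite word over the alphabet ℕ obtained by concatenating, for i = 1, 2, 3, …, the letter i repeated 2^i times (so y = 1^2 2^4 3^8 4^16 ⋯). Then y is ω-power-free, and yet for every k ≥ 17 the set AP(y,k) is empty, i.e., no prefix of y of length km (m ≥ 1) is a k-anti-power. In particular, there exists an ω-power-free infinite word over an infinite alphabet that has no k-anti-power prefix for any block length. -/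
/-- The prefix of `x` of length `k*m` is a `k`-anti-power: its `k` consecutive blocks
of length `m` are pairwise distinct. -/
def PrefixAntipower {A : Type*} (x : ℕ → A) (k m : ℕ) : Prop :=
  ∀ i < k, ∀ j < k, i ≠ j → blockAt x m i ≠ blockAt x m j

/-- The infinite word `y = 1² 2⁴ 3⁸ 4¹⁶ ⋯` over the alphabet `ℕ`: for `i ≥ 1` the letter `i`
is repeated `2^i` times.  The letter at the (0-indexed) position `n` is `Nat.log 2 (n + 2)`,
since the block of the letter `i` occupies positions `2^i - 2, …, 2^(i+1) - 3`. -/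
def yWord : ℕ → ℕ := fun n => Nat.log 2 (n + 2)

lemma occ_elem {A : Type*} {x : ℕ → A} {u : List A} {i : ℕ} (h : OccursAt x u i)
    {j : ℕ} (hj : j < u.length) : u[j] = x (i + j) := by
  rw [List.getElem_of_eq h hj]
  simp

lemma powWord_succ {A : Type*} (u : List A) (n : ℕ) :
    powWord u (n+1) = u ++ powWord u n := by
  simp [powWord, List.replicate_succ]

lemma powWord_two {A : Type*} (u : List A) : powWord u 2 = u ++ u := by
  rw [powWord_succ, powWord_succ]; simp [powWord]

lemma powWord_replicate {A : Type*} (a : A) (L ℓ : ℕ) :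
    powWord (List.replicate L a) ℓ = List.replicate (ℓ * L) a := by
  induction ℓ with
  | zero => simp [powWord]
  | succ n ih => rw [powWord_succ, ih, ← List.replicate_add]; ring_nf

lemma yWord_eq_iff (n a : ℕ) : yWord n = a ↔ 2^a ≤ n+2 ∧ n+2 < 2^(a+1) := by
  constructor
  · rintro rfl
    exact ⟨Nat.pow_log_le_self 2 (by omega), Nat.lt_pow_succ_log_self (by norm_num) _⟩
  · rintro ⟨h1, h2⟩
    exact Nat.log_eq_of_pow_le_of_lt_pow h1 h2

lemma yWord_mono : Monotone yWord := fun a b h => Nat.log_mono_right (by omega)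

lemma part1 : OmegaPowerFree yWord := by
  rintro u hne ⟨i, hocc⟩
  have hL : 0 < u.length := List.length_pos_iff.mpr hne
  by_cases hconst : ∀ j < u.length, yWord (i + j) = yWord i
  · -- constant word
    set a := yWord i with ha
    have hurep : u = List.replicate u.length a := by
      apply List.ext_getElem (by simp)
      intro j h1 h2
      rw [List.getElem_replicate, occ_elem hocc h1]
      exact hconst j h1
    refine ⟨2^a + 1, ?_⟩
    rintro ⟨i', hocc'⟩
    rw [hurep, powWord_replicate] at hocc'
    set M := (2^a+1) * u.length with hM
    have hM1 : 2^a + 1 ≤ M := Nat.le_mul_of_pos_right _ hL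
    have hP : 0 < 2^a := Nat.pow_pos (by norm_num)
    have e0 : a = yWord (i' + 0) := by
      have := occ_elem hocc' (j := 0) (by simp; omega)
      simpa using this
    have eM : a = yWord (i' + (M-1)) := by
      have := occ_elem hocc' (j := M-1) (by simp; omega)
      simpa using this
    have h1 : 2^a ≤ i' + 0 + 2 := ((yWord_eq_iff _ _).mp e0.symm).1
    have h2 : i' + (M-1) + 2 < 2^(a+1) := ((yWord_eq_iff _ _).mp eM.symm).2
    rw [pow_succ] at h2
    omega
  · push_neg at hconst
    obtain ⟨j, hj, hne'⟩ := hconst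
    have hgt : yWord i < yWord (i + j) :=
      lt_of_le_of_ne (yWord_mono (Nat.le_add_right _ _)) (Ne.symm hne')
    refine ⟨2, ?_⟩
    rintro ⟨i', hocc'⟩
    rw [powWord_two] at hocc'
    have hjlt : j < (u ++ u).length := by simp; omega
    have hLlt : u.length < (u ++ u).length := by simp; omega
    have e1 : (u ++ u)[j]'hjlt = yWord (i' + j) := occ_elem hocc' hjlt
    have e1' : (u ++ u)[j]'hjlt = u[j]'hj := List.getElem_append_left hj
    have e2 : (u ++ u)[u.length]'hLlt = yWord (i' + u.length) := occ_elem hocc' hLlt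
    have e2' : (u ++ u)[u.length]'hLlt = u[0]'hL := by
      rw [List.getElem_append_right (le_refl u.length)]
      simp
    have eu_j : u[j]'hj = yWord (i + j) := occ_elem hocc hj
    have eu_0 : u[0]'hL = yWord (i + 0) := occ_elem hocc hL
    have hmono : yWord (i' + j) ≤ yWord (i' + u.length) := yWord_mono (by omega)
    rw [← e1, e1', eu_j, ← e2, e2', eu_0] at hmono
    simp at hmono
    omega

lemma part2 : ∀ k : ℕ, 17 ≤ k → ∀ m : ℕ, 1 ≤ m → ¬ PrefixAntipower yWord k m := by
  intro k hk m hm hap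
  have h8 : 2 ^ Nat.log 2 (8*m) ≤ 8*m := Nat.pow_log_le_self 2 (by omega)
  have h8' : 8*m < 2 ^ (Nat.log 2 (8*m) + 1) := Nat.lt_pow_succ_log_self (by norm_num) _
  set a := Nat.log 2 (8*m) with ha
  rw [pow_succ] at h8'
  have h4 : 4*m < 2^a := by omega
  set s := 2^a - 2 with hs
  set i := s / m + 1 with hi
  have hdm := Nat.div_add_mod s m
  have hmod : s % m < m := Nat.mod_lt _ (by omega)
  have him : i * m = m * (s / m) + m := by rw [hi]; ring
  have hi1 : s < i * m := by omega
  have hi2 : i * m ≤ s + m := by omega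
  have hkey : ∀ p, i * m ≤ p → p < i * m + 2 * m → yWord p = a := by
    intro p hp1 hp2
    apply (yWord_eq_iff p a).mpr
    rw [pow_succ]
    constructor <;> omega
  have e1 : (i+1)*m = i*m + m := by ring
  have hblock : blockAt yWord m i = blockAt yWord m (i+1) := by
    unfold blockAt
    apply List.map_congr_left
    intro t ht
    rw [List.mem_range] at ht
    rw [hkey (i*m+t) (by omega) (by omega), e1,
      hkey (i*m+m+t) (by omega) (by omega)]
  have h9 : i * m < 9 * m := by omega
  have hik : i < 9 := Nat.lt_of_mul_lt_mul_right h9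
  exact hap i (by omega) (i+1) (by omega) (by omega) hblock

/-- The word `y = 1² 2⁴ 3⁸ ⋯` is `ω`-power-free, yet for every `k ≥ 17`
no prefix of `y` of length `k*m` (`m ≥ 1`) is a `k`-anti-power, i.e. `AP(y,k) = ∅`.
In particular, there is an `ω`-power-free infinite word over an infinite alphabet having,
for some `k`, no `k`-anti-power prefix of any block length. -/
theorem statement3 :
    (OmegaPowerFree yWord ∧
      ∀ k : ℕ, 17 ≤ k → ∀ m : ℕ, 1 ≤ m → ¬ PrefixAntipower yWord k m) ∧
    ∃ x : ℕ → ℕ, OmegaPowerFree x ∧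
      ∃ k : ℕ, ∀ m : ℕ, 1 ≤ m → ¬ PrefixAntipower x k m := by
  exact ⟨⟨part1, part2⟩, yWord, part1, 17, part2 17 le_rfl⟩
end
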